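/- For |t| < 1, Σ_{n=0}^∞ M_n t^n = (1/(1-t)) · arcsinh((1-t)/(1+t)), where M_n = Σ_{k=0}^n (n choose k) · (2^k c_k)/k! and c_k = (d^k/dx^k) arcsinh(1/x) evaluated at x = 1. -/

import Mathlib

set_option maxHeartbeats 1000000

open Real

noncomputable def cCoeff (k : ℕ) : ℝ :=
  iteratedDeriv k (fun x : ℝ => Real.arsinh (1 / x)) 1

noncomputable def Mdiag (n : ℕ) : ℝ :=
  ∑ k ∈ Finset.range (n + 1),
    (n.choose k : ℝ) * (2 ^ k * cCoeff k) / (Nat.factorial k)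

namespace MdiagAux

noncomputable def asinhC (u : ℂ) : ℂ := Complex.log (u + (1 + u ^ 2) ^ (1/2 : ℂ))

noncomputable def fC (z : ℂ) : ℂ := asinhC z⁻¹

noncomputable def FC (z : ℂ) : ℂ := (1 - z)⁻¹ * fC ((1 + z) / (1 - z))

lemma re_inv_pos {z : ℂ} (hz : 0 < z.re) : 0 < (z⁻¹).re := by
  have hz0 : z ≠ 0 := fun h => by simp [h] at hz
  rw [Complex.inv_re]
  exact div_pos hz (Complex.normSq_pos.mpr hz0)

lemma one_add_sq_slitPlane {z : ℂ} (hz : 0 < z.re) : 1 + z ^ 2 ∈ Complex.slitPlane := by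
  rcases eq_or_ne z.im 0 with h | h
  · refine Or.inl ?_
    simp only [Complex.add_re, Complex.one_re, sq, Complex.mul_re, h, mul_zero, sub_zero]
    nlinarith
  · refine Or.inr ?_
    simp only [Complex.add_im, Complex.one_im, sq, Complex.mul_im, zero_add]
    intro hc
    rcases h.lt_or_gt with h1 | h1
    · nlinarith
    · nlinarith

lemma cpow_half_re_pos {w : ℂ} (hw : w ∈ Complex.slitPlane) : 0 < (w ^ (1/2 : ℂ)).re := by
  have hw0 : w ≠ 0 := Complex.slitPlane_ne_zero hw
  rw [Complex.cpow_def_of_ne_zero hw0, Complex.exp_re]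
  apply mul_pos (Real.exp_pos _)
  have him : (Complex.log w * (1/2)).im = w.arg / 2 := by
    simp [Complex.mul_im, Complex.log_im]
    ring
  rw [him]
  apply Real.cos_pos_of_mem_Ioo
  constructor
  · have := Complex.neg_pi_lt_arg w; linarith
  · have h1 := Complex.arg_le_pi w
    have h2 := Complex.slitPlane_arg_ne_pi hw
    have : w.arg < Real.pi := lt_of_le_of_ne h1 h2
    linarith
lemma asinhC_analyticAt {u : ℂ} (hu : 0 < u.re) : AnalyticAt ℂ asinhC u := by
  have hslit := one_add_sq_slitPlane hu
  have h1 : AnalyticAt ℂ (fun u : ℂ => u + (1 + u ^ 2) ^ (1/2 : ℂ)) u :=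
    analyticAt_id.add ((analyticAt_const.add (analyticAt_id.pow 2)).cpow analyticAt_const hslit)
  have h2 : 0 < (u + (1 + u ^ 2) ^ (1/2 : ℂ)).re := by
    have := cpow_half_re_pos hslit
    rw [Complex.add_re]; linarith
  exact AnalyticAt.clog h1 (Or.inl h2)

lemma fC_analyticAt {z : ℂ} (hz : 0 < z.re) : AnalyticAt ℂ fC z := by
  have hz0 : z ≠ 0 := fun h => by simp [h] at hz
  exact (asinhC_analyticAt (re_inv_pos hz)).comp (analyticAt_id.inv hz0)

lemma fC_analyticOnNhd : AnalyticOnNhd ℂ fC {z : ℂ | 0 < z.re} := fun _ hz => fC_analyticAt hz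

lemma asinhC_ofReal {u : ℝ} (hu : 0 < u) : asinhC (u : ℂ) = (Real.arsinh u : ℂ) := by
  have hnn : (0:ℝ) ≤ 1 + u ^ 2 := by positivity
  have h2 : (1 + (u:ℂ) ^ 2) ^ (1/2 : ℂ) = ((Real.sqrt (1 + u ^ 2) : ℝ) : ℂ) := by
    have hc : (1 + (u:ℂ) ^ 2) = (((1 + u ^ 2 : ℝ)) : ℂ) := by push_cast; ring
    rw [hc, Real.sqrt_eq_rpow, Complex.ofReal_cpow hnn]
    norm_num
  rw [asinhC, h2]
  have h3 : (u:ℂ) + ((Real.sqrt (1 + u ^ 2) : ℝ) : ℂ) = (((u + Real.sqrt (1 + u ^ 2) : ℝ)) : ℂ) := by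
    push_cast; ring
  have hpos : (0:ℝ) < u + Real.sqrt (1 + u ^ 2) := by
    have := Real.sqrt_nonneg (1 + u ^ 2); linarith
  rw [h3, ← Complex.ofReal_log hpos.le, Real.arsinh]

lemma fC_ofReal {x : ℝ} (hx : 0 < x) : fC (x : ℂ) = ((Real.arsinh (1/x) : ℝ) : ℂ) := by
  rw [fC, ← Complex.ofReal_inv, asinhC_ofReal (by positivity), one_div]
lemma iteratedDeriv_fC_analytic (k : ℕ) :
    AnalyticOnNhd ℂ (iteratedDeriv k fC) {z : ℂ | 0 < z.re} := by
  have := fC_analyticOnNhd.iterated_deriv k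
  rwa [← iteratedDeriv_eq_iterate] at this

lemma iteratedDeriv_fC_real (k : ℕ) : ∀ x : ℝ, 0 < x →
    iteratedDeriv k fC (x : ℂ) =
      ((iteratedDeriv k (fun y : ℝ => Real.arsinh (1/y)) x : ℝ) : ℂ) := by
  induction k with
  | zero =>
    intro x hx
    simpa [iteratedDeriv_zero] using fC_ofReal hx
  | succ k ih =>
    intro x hx
    have hdiff : DifferentiableAt ℂ (iteratedDeriv k fC) (x : ℂ) :=
      ((iteratedDeriv_fC_analytic k) _ (by simpa using hx)).differentiableAt
    set g' := deriv (iteratedDeriv k fC) (x : ℂ) with hg'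
    have hD : HasDerivAt (iteratedDeriv k fC) g' (x : ℂ) := hdiff.hasDerivAt
    have hev : ∀ᶠ y : ℝ in nhds x, 0 < y := eventually_gt_nhds hx
    have hevEq : (fun y : ℝ => (iteratedDeriv k fC (y : ℂ)).re) =ᶠ[nhds x]
        (fun y : ℝ => iteratedDeriv k (fun y : ℝ => Real.arsinh (1/y)) y) := by
      filter_upwards [hev] with y hy
      rw [ih y hy, Complex.ofReal_re]
    have hevEq2 : (fun y : ℝ => ((-Complex.I) * iteratedDeriv k fC (y : ℂ)).re) =ᶠ[nhds x]
        (fun _ : ℝ => (0:ℝ)) := by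
      filter_upwards [hev] with y hy
      rw [ih y hy]
      simp
    have hre : HasDerivAt (fun y : ℝ => iteratedDeriv k (fun y : ℝ => Real.arsinh (1/y)) y)
        g'.re x := (hD.real_of_complex).congr_of_eventuallyEq hevEq.symm
    have him : HasDerivAt (fun _ : ℝ => (0:ℝ)) ((-Complex.I) * g').re x :=
      ((hD.const_mul (-Complex.I)).real_of_complex).congr_of_eventuallyEq hevEq2.symm
    have him0 : ((-Complex.I) * g').re = 0 := him.unique (hasDerivAt_const x 0)
    have hgim : g'.im = 0 := by
      simpa [Complex.mul_re] using him0
    have hg'eq : g' = ((g'.re : ℝ) : ℂ) := by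
      apply Complex.ext <;> simp [hgim]
    rw [iteratedDeriv_succ, iteratedDeriv_succ, ← hg', hg'eq, ← hre.deriv]
lemma taylor_fC {u : ℂ} (hu : ‖u‖ < 1) :
    HasSum (fun k : ℕ => ((k.factorial : ℂ))⁻¹ * iteratedDeriv k fC 1 * u ^ k)
      (fC (1 + u)) := by
  have hdiff : DifferentiableOn ℂ fC (Metric.ball 1 1) := by
    intro z hz
    have h1 : ‖z - 1‖ < 1 := by
      simpa [Metric.mem_ball, dist_eq_norm] using hz
    have h2 : 0 < z.re := by
      have h3 : |(z - 1).re| ≤ ‖z - 1‖ := Complex.abs_re_le_norm _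
      have h4 : (z - 1).re = z.re - 1 := by simp
      rw [h4] at h3
      have h5 := abs_lt.mp (h3.trans_lt h1)
      linarith [h5.1]
    exact (fC_analyticAt h2).differentiableAt.differentiableWithinAt
  have hmem : (1 + u) ∈ Metric.ball (1:ℂ) 1 := by
    simpa [Metric.mem_ball, dist_eq_norm] using hu
  have H := Complex.hasSum_taylorSeries_on_ball hdiff hmem
  simp only [add_sub_cancel_left, smul_eq_mul] at H
  convert H using 2 with k
  · rfl
  · ring

lemma hasSum_choose_pow {𝕜 : Type*} [NontriviallyNormedField 𝕜] [CompleteSpace 𝕜]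
    (k : ℕ) {r : 𝕜} (hr : ‖r‖ < 1) :
    HasSum (fun n : ℕ => (n.choose k : 𝕜) * r ^ n) (r ^ k / (1 - r) ^ (k + 1)) := by
  have h := hasSum_choose_mul_geometric_of_norm_lt_one k hr
  have h2 := h.mul_left (r ^ k)
  have h3 : (fun n : ℕ => r ^ k * (((n + k).choose k : 𝕜) * r ^ n)) =
      fun n : ℕ => ((n + k).choose k : 𝕜) * r ^ (n + k) := by
    funext n; rw [pow_add]; ring
  rw [h3] at h2
  have h4 := (hasSum_nat_add_iff (f := fun n : ℕ => (n.choose k : 𝕜) * r ^ n) k).mp h2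
  have h5 : ∑ i ∈ Finset.range k, (i.choose k : 𝕜) * r ^ i = 0 := by
    apply Finset.sum_eq_zero
    intro i hi
    rw [Nat.choose_eq_zero_of_lt (Finset.mem_range.mp hi)]
    simp
  rw [h5, add_zero, mul_one_div] at h4
  exact h4
noncomputable def bC (k : ℕ) : ℂ := ((k.factorial : ℂ))⁻¹ * iteratedDeriv k fC 1

lemma bC_bound {ρ : ℝ} (h0 : 0 < ρ) (h1 : ρ < 1) : ∃ C : ℝ, ∀ k, ‖bC k‖ * ρ ^ k ≤ C := by
  have hρn : ‖((ρ : ℝ) : ℂ)‖ < 1 := by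
    rw [Complex.norm_real, Real.norm_eq_abs, abs_of_pos h0]; exact h1
  have htay : HasSum (fun k => bC k * ((ρ : ℝ) : ℂ) ^ k) (fC (1 + ((ρ : ℝ) : ℂ))) := by
    simpa [bC, mul_assoc] using taylor_fC hρn
  have h2 : Filter.Tendsto (fun k => ‖bC k * ((ρ : ℝ) : ℂ) ^ k‖) Filter.atTop (nhds 0) := by
    simpa using (htay.summable.tendsto_atTop_zero).norm
  have h3 : (fun k => ‖bC k * ((ρ : ℝ) : ℂ) ^ k‖) = fun k => ‖bC k‖ * ρ ^ k := by
    funext k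
    rw [norm_mul, norm_pow, Complex.norm_real, Real.norm_eq_abs, abs_of_pos h0]
  rw [h3] at h2
  obtain ⟨C, hC⟩ := h2.bddAbove_range
  exact ⟨C, fun k => hC (Set.mem_range_self k)⟩

lemma FC_eq {t : ℂ} (h1t : (1 : ℂ) - t ≠ 0) : FC t = (1 - t)⁻¹ * fC (1 + 2 * t / (1 - t)) := by
  rw [FC]
  congr 2
  field_simp
  ring

lemma hasSum_FC {t : ℂ} (ht : ‖t‖ < 1/3) :
    HasSum (fun n : ℕ => (∑ k ∈ Finset.range (n+1),
        (n.choose k : ℂ) * (2 ^ k * iteratedDeriv k fC 1) / (k.factorial : ℂ)) * t ^ n)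
      (FC t) := by
  have ht1 : ‖t‖ < 1 := ht.trans (by norm_num)
  have h1tnorm : (0:ℝ) < 1 - ‖t‖ := by linarith
  have hnorm1t : (1:ℝ) - ‖t‖ ≤ ‖(1:ℂ) - t‖ := by
    simpa using norm_sub_norm_le (1:ℂ) t
  have h1t : (1 : ℂ) - t ≠ 0 := by
    intro h
    rw [h, norm_zero] at hnorm1t
    linarith
  set u : ℂ := 2 * t / (1 - t) with hu_def
  have hu : ‖u‖ < 1 := by
    rw [hu_def, norm_div, norm_mul]
    rw [div_lt_one (h1tnorm.trans_le hnorm1t)]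
    have h2 : ‖(2:ℂ)‖ = 2 := by norm_num
    rw [h2]
    have : 2 * ‖t‖ < 1 - ‖t‖ := by linarith
    linarith
  set q : ℝ := 2 * ‖t‖ / (1 - ‖t‖) with hq_def
  have hq1 : q < 1 := by rw [hq_def, div_lt_one h1tnorm]; linarith
  have hq0 : 0 ≤ q := by positivity
  set ρ : ℝ := (q + 1)/2 with hρ_def
  have hρq : q < ρ := by rw [hρ_def]; linarith
  have hρ1 : ρ < 1 := by rw [hρ_def]; linarith
  have hρ0 : 0 < ρ := by rw [hρ_def]; linarith
  obtain ⟨C, hC⟩ := bC_bound hρ0 hρ1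
  have hC0 : 0 ≤ C := le_trans (by positivity) (hC 0)
  set g : ℕ × ℕ → ℂ := fun p => (p.2.choose p.1 : ℂ) * (2 ^ p.1 * bC p.1) * t ^ p.2 with hg_def
  have hrow : ∀ n : ℕ, HasSum (fun k => g (k, n))
      ((∑ k ∈ Finset.range (n+1),
        (n.choose k : ℂ) * (2 ^ k * iteratedDeriv k fC 1) / (k.factorial : ℂ)) * t ^ n) := by
    intro n
    have hfin : ∀ k ∉ Finset.range (n+1), g (k, n) = 0 := by
      intro k hk
      have hnk : n < k := by
        by_contra hc
        exact hk (Finset.mem_range.mpr (by omega))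
      simp [hg_def, Nat.choose_eq_zero_of_lt hnk]
    have h := (hasSum_sum_of_ne_finset_zero hfin : HasSum _ _)
    convert h using 1
    rw [Finset.sum_mul]
    apply Finset.sum_congr rfl
    intro k _
    simp only [hg_def, bC]
    ring
  have hcol : ∀ k : ℕ, HasSum (fun n => g (k, n))
      ((2 ^ k * bC k) * (t ^ k / (1 - t) ^ (k+1))) := by
    intro k
    have h := (hasSum_choose_pow k ht1).mul_left (2 ^ k * bC k)
    convert h using 2 with n
    · rfl
    simp only [hg_def]
    ring
  have hcolval : ∀ k : ℕ, (2 ^ k * bC k) * (t ^ k / (1 - t) ^ (k+1))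
      = (1 - t)⁻¹ * (bC k * u ^ k) := by
    intro k
    rw [hu_def, div_pow, mul_pow]
    have hpk : (1 - t) ^ k ≠ 0 := pow_ne_zero _ h1t
    field_simp
    ring
  have htay : HasSum (fun k => bC k * u ^ k) (fC (1 + u)) := by
    simpa [bC, mul_assoc] using taylor_fC hu
  have hcolsum : HasSum (fun k => (1 - t)⁻¹ * (bC k * u ^ k)) ((1 - t)⁻¹ * fC (1 + u)) :=
    htay.mul_left _
  have htnorm : ‖(‖t‖ : ℝ)‖ < 1 := by
    rw [Real.norm_eq_abs, abs_of_nonneg (norm_nonneg t)]; exact ht1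
  have hnormrow : ∀ k : ℕ, HasSum (fun n => ‖g (k, n)‖)
      (‖2 ^ k * bC k‖ * (‖t‖ ^ k / (1 - ‖t‖) ^ (k+1))) := by
    intro k
    have h := (hasSum_choose_pow (𝕜 := ℝ) k htnorm).mul_left ‖2 ^ k * bC k‖
    convert h using 2 with n
    · rfl
    simp only [hg_def, norm_mul, norm_pow, Complex.norm_natCast]
    ring
  have hsummable : Summable (fun p : ℕ × ℕ => ‖g p‖) := by
    rw [summable_prod_of_nonneg (fun p => norm_nonneg _)]
    refine ⟨fun k => (hnormrow k).summable, ?_⟩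
    refine Summable.of_nonneg_of_le (g := fun k => ∑' n, ‖g (k, n)‖)
      (f := fun k => (C / (1 - ‖t‖)) * (q / ρ) ^ k)
      (fun k => tsum_nonneg fun n => norm_nonneg _) ?_ ?_
    · intro k
      show (∑' n, ‖g (k, n)‖) ≤ _
      rw [(hnormrow k).tsum_eq]
      have heq : ‖2 ^ k * bC k‖ * (‖t‖ ^ k / (1 - ‖t‖) ^ (k+1))
          = (1 / (1 - ‖t‖)) * (‖bC k‖ * q ^ k) := by
        rw [norm_mul, norm_pow]
        have h2 : ‖(2:ℂ)‖ = 2 := by norm_num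
        rw [h2, hq_def, div_pow, mul_pow]
        field_simp
        ring
      rw [heq]
      have hstep : ‖bC k‖ * q ^ k ≤ C * (q / ρ) ^ k := by
        have hpp : ρ * (q / ρ) = q := by field_simp
        have h3 : ‖bC k‖ * q ^ k = (‖bC k‖ * ρ ^ k) * (q / ρ) ^ k := by
          rw [mul_assoc, ← mul_pow, hpp]
        rw [h3]
        apply mul_le_mul_of_nonneg_right (hC k) (by positivity)
      calc (1 / (1 - ‖t‖)) * (‖bC k‖ * q ^ k)
          ≤ (1 / (1 - ‖t‖)) * (C * (q / ρ) ^ k) := by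
            apply mul_le_mul_of_nonneg_left hstep (by positivity)
        _ = (C / (1 - ‖t‖)) * (q / ρ) ^ k := by ring
    · apply Summable.mul_left
      apply summable_geometric_of_lt_one (by positivity)
      rw [div_lt_one hρ0]
      exact hρq
  have hg_sum : Summable g := hsummable.of_norm
  obtain ⟨S, hS⟩ := hg_sum
  have hcol' : HasSum (fun k => (1 - t)⁻¹ * (bC k * u ^ k)) S := by
    exact hS.prod_fiberwise fun k => (hcolval k) ▸ hcol k
  have hSval : S = (1 - t)⁻¹ * fC (1 + u) := hcol'.unique hcolsum
  have hswap : HasSum (fun p : ℕ × ℕ => g (p.2, p.1)) S :=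
    ((Equiv.prodComm ℕ ℕ).hasSum_iff).mpr hS
  have hfinal := hswap.prod_fiberwise (g := fun n => (∑ k ∈ Finset.range (n+1),
        (n.choose k : ℂ) * (2 ^ k * iteratedDeriv k fC 1) / (k.factorial : ℂ)) * t ^ n)
      (fun n => hrow n)
  rw [hSval] at hfinal
  rwa [FC_eq h1t, ← hu_def]
lemma FC_analyticAt {z : ℂ} (hz : ‖z‖ < 1) : AnalyticAt ℂ FC z := by
  have hns : Complex.normSq z < 1 := by
    rw [Complex.normSq_eq_norm_sq]
    have : ‖z‖ < 1 := hz
    nlinarith [norm_nonneg z]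
  have hsq : z.re * z.re + z.im * z.im < 1 := by
    rwa [Complex.normSq_apply] at hns
  have h1z : (1:ℂ) - z ≠ 0 := by
    intro h
    have hz1 : z = 1 := by linear_combination -h
    rw [hz1] at hz
    simp at hz
  have hre : 0 < ((1 + z)/(1 - z)).re := by
    rw [Complex.div_re, ← add_div]
    apply div_pos
    · simp only [Complex.add_re, Complex.one_re, Complex.sub_re, Complex.add_im,
        Complex.one_im, Complex.sub_im, zero_add, zero_sub]
      nlinarith
    · exact Complex.normSq_pos.mpr h1z
  have hm : AnalyticAt ℂ (fun x : ℂ => (1 + x)/(1 - x)) z :=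
    (analyticAt_const.add analyticAt_id).div (analyticAt_const.sub analyticAt_id) h1z
  have hcomp : AnalyticAt ℂ (fun x : ℂ => fC ((1 + x)/(1 - x))) z :=
    (fC_analyticAt hre).comp (f := fun x : ℂ => (1 + x)/(1 - x)) hm
  exact ((analyticAt_const.sub analyticAt_id).inv h1z).mul hcomp

lemma FC_real {t : ℝ} (ht : |t| < 1) :
    FC (t : ℂ) = ((1/(1 - t) * Real.arsinh ((1 - t)/(1 + t)) : ℝ) : ℂ) := by
  obtain ⟨hm, hp⟩ := abs_lt.mp ht
  have h1 : (0:ℝ) < 1 - t := by linarith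
  have h2 : (0:ℝ) < 1 + t := by linarith
  have harg : ((1 + (t:ℂ))/(1 - (t:ℂ)))⁻¹ = (((1 - t)/(1 + t) : ℝ) : ℂ) := by
    rw [inv_div]
    push_cast
    ring
  rw [FC, fC, harg, asinhC_ofReal (by positivity)]
  push_cast
  ring

lemma Mdiag_cast (n : ℕ) : ((Mdiag n : ℝ) : ℂ) =
    ∑ k ∈ Finset.range (n+1),
      (n.choose k : ℂ) * (2 ^ k * iteratedDeriv k fC 1) / (k.factorial : ℂ) := by
  rw [Mdiag]
  push_cast
  apply Finset.sum_congr rfl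
  intro k _
  have h := iteratedDeriv_fC_real k 1 one_pos
  rw [Complex.ofReal_one] at h
  rw [cCoeff, h]

lemma hasSum_FC' {z : ℂ} (hz : ‖z‖ < 1/3) :
    HasSum (fun n => ((Mdiag n : ℝ) : ℂ) * z ^ n) (FC z) := by
  have := hasSum_FC hz
  simp only [← Mdiag_cast] at this
  exact this

noncomputable def pSeries : FormalMultilinearSeries ℂ ℂ ℂ :=
  FormalMultilinearSeries.ofScalars ℂ (fun n => ((Mdiag n : ℝ) : ℂ))

lemma pSeries_onBall : HasFPowerSeriesOnBall FC pSeries 0 ((3/10 : NNReal) : ENNReal) := by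
  constructor
  · have h1 : Filter.Tendsto (fun n => ‖pSeries n‖ * ((3/10 : NNReal) : ℝ) ^ n)
        Filter.atTop (nhds 0) := by
      have hz : ‖((3/10 : ℝ) : ℂ)‖ < 1/3 := by
        rw [Complex.norm_real, Real.norm_eq_abs, abs_of_pos (by norm_num : (0:ℝ) < 3/10)]
        norm_num
      have h2 := (hasSum_FC' hz).summable.tendsto_atTop_zero.norm
      rw [norm_zero] at h2
      convert h2 using 2 with n
      rw [pSeries, FormalMultilinearSeries.ofScalars_norm, norm_mul, norm_pow,
        Complex.norm_real, Real.norm_eq_abs]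
      norm_num
    exact pSeries.le_radius_of_tendsto h1
  · simp
  · intro y hy
    rw [mem_emetric_ball_zero_iff, enorm_eq_nnnorm, ENNReal.coe_lt_coe] at hy
    have hy2 : ‖y‖ < (3/10 : ℝ) := by
      have := NNReal.coe_lt_coe.mpr hy
      simpa [coe_nnnorm] using this
    have hy' : ‖y‖ < 1/3 := by linarith
    have := hasSum_FC' hy'
    simp only [zero_add, pSeries, FormalMultilinearSeries.ofScalars_apply_eq, smul_eq_mul]
    exact this
end MdiagAux

open MdiagAux

theorem Mdiag_generating_function (t : ℝ) (ht : |t| < 1) :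
    HasSum (fun n => Mdiag n * t ^ n)
      ((1 / (1 - t)) * Real.arsinh ((1 - t) / (1 + t))) := by
  have hR0 : (0:ℝ) < (1 + |t|)/2 := by positivity
  set R : NNReal := Real.toNNReal ((1 + |t|)/2) with hR
  have hRcoe : (R : ℝ) = (1 + |t|)/2 := Real.coe_toNNReal _ hR0.le
  have hRlt : (R : ℝ) < 1 := by rw [hRcoe]; linarith
  have hdiff : DifferentiableOn ℂ FC (Metric.closedBall 0 (R:ℝ)) := by
    intro z hz
    have hz1 : ‖z‖ ≤ (R:ℝ) := by
      simpa [Metric.mem_closedBall, dist_zero_right] using hz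
    exact (FC_analyticAt (lt_of_le_of_lt hz1 hRlt)).differentiableAt.differentiableWithinAt
  have hR0' : 0 < R := Real.toNNReal_pos.mpr hR0
  have h2 := hdiff.hasFPowerSeriesOnBall hR0'
  have h3 := pSeries_onBall.exchange_radius h2
  have htmem : (t : ℂ) ∈ Metric.eball (0:ℂ) R := by
    rw [mem_emetric_ball_zero_iff, enorm_eq_nnnorm, ENNReal.coe_lt_coe, ← NNReal.coe_lt_coe, coe_nnnorm,
      Complex.norm_real, Real.norm_eq_abs, hRcoe]
    linarith
  have hs := h3.hasSum htmem
  rw [zero_add] at hs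
  have hterm : (fun n => pSeries n fun _ => (t:ℂ)) = fun n => ((Mdiag n * t ^ n : ℝ) : ℂ) := by
    funext n
    rw [pSeries, FormalMultilinearSeries.ofScalars_apply_eq, smul_eq_mul]
    push_cast
    ring
  rw [hterm, FC_real ht] at hs
  exact Complex.hasSum_ofReal.mp hs
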